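/- Let G be a finite group. Then the number of edges e* of P*(G) satisfies 2e* = Σ_{g ∈ G, g ≠ 1} (2·o(g) − φ(o(g)) − 3), where φ is Euler's totient function. -/

import Mathlib

def powerGraph (G : Type*) [Group G] : SimpleGraph G where
  Adj x y := x ≠ y ∧ ((∃ m : ℕ, 0 < m ∧ y = x ^ m) ∨ (∃ m : ℕ, 0 < m ∧ x = y ^ m))
  symm := ⟨fun x y h => ⟨h.1.symm, h.2.symm⟩⟩
  loopless := ⟨fun x h => h.1 rfl⟩

def powerGraphStar (G : Type*) [Group G] : SimpleGraph {g : G // g ≠ 1} :=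
  (powerGraph G).induce {g : G | g ≠ 1}

open Finset

section Aux
variable {G : Type*} [Group G] [Fintype G] [DecidableEq G]

omit [Fintype G] [DecidableEq G] in
lemma zpowers_isCyclic (x : G) : IsCyclic (Subgroup.zpowers x) := by
  refine ⟨⟨⟨x, Subgroup.mem_zpowers x⟩, fun a => ?_⟩⟩
  obtain ⟨k, hk⟩ := a.2
  exact ⟨k, Subtype.ext (by simpa using hk)⟩

omit [DecidableEq G] in
lemma pospow_iff_mem_zpowers (x y : G) :
    (∃ m : ℕ, 0 < m ∧ y = x ^ m) ↔ y ∈ Subgroup.zpowers x := by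
  constructor
  · rintro ⟨m, -, rfl⟩
    exact pow_mem (Subgroup.mem_zpowers x) m
  · intro h
    obtain ⟨n, rfl⟩ := mem_powers_iff_mem_zpowers.mpr h
    exact ⟨n + orderOf x, Nat.add_pos_right _ (orderOf_pos x),
      by rw [pow_add, pow_orderOf_eq_one, mul_one]⟩

omit [DecidableEq G] in
lemma powerGraph_adj (x y : G) :
    (powerGraph G).Adj x y ↔
      x ≠ y ∧ (y ∈ Subgroup.zpowers x ∨ x ∈ Subgroup.zpowers y) := by
  show (x ≠ y ∧ _) ↔ _
  rw [pospow_iff_mem_zpowers x y, pospow_iff_mem_zpowers y x]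

omit [DecidableEq G] in
lemma zpowers_eq_iff (x y : G) :
    Subgroup.zpowers y = Subgroup.zpowers x ↔
      y ∈ Subgroup.zpowers x ∧ orderOf y = orderOf x := by
  constructor
  · intro h
    exact ⟨h ▸ Subgroup.mem_zpowers y, by
      rw [← Nat.card_zpowers, ← Nat.card_zpowers, h]⟩
  · rintro ⟨hm, ho⟩
    exact Subgroup.eq_of_le_of_card_ge (Subgroup.zpowers_le.mpr hm)
      (le_of_eq (by rw [Nat.card_zpowers, Nat.card_zpowers, ho]))

lemma card_filter_zpowers_eq (x : G)
    [DecidablePred fun y : G => Subgroup.zpowers y = Subgroup.zpowers x] :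
    #(univ.filter fun y : G => Subgroup.zpowers y = Subgroup.zpowers x)
      = Nat.totient (orderOf x) := by
  classical
  have : IsCyclic (Subgroup.zpowers x) := zpowers_isCyclic x
  have hcard : Fintype.card (Subgroup.zpowers x) = orderOf x := by
    rw [← Nat.card_eq_fintype_card, Nat.card_zpowers]
  have key := IsCyclic.card_orderOf_eq_totient (α := Subgroup.zpowers x)
    (d := orderOf x) (by rw [hcard])
  rw [← key]
  apply Finset.card_bij (fun y hy => (⟨y, by
      have := (mem_filter.mp hy).2
      exact ((zpowers_eq_iff x y).mp this).1⟩ : Subgroup.zpowers x))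
  · intro y hy
    have h := (mem_filter.mp hy).2
    simp only [mem_filter, mem_univ, true_and]
    rw [Subgroup.orderOf_mk]
    exact ((zpowers_eq_iff x y).mp h).2
  · intro a ha b hb hab
    simpa using congrArg Subtype.val hab
  · intro a ha
    refine ⟨a.1, ?_, by simp⟩
    have h := (mem_filter.mp ha).2
    rw [Subgroup.orderOf_mk] at h
    simp only [mem_filter, mem_univ, true_and]
    exact (zpowers_eq_iff x a.1).mpr ⟨a.2, h⟩

lemma card_A (x : G) (hx : x ≠ 1)
    [DecidablePred fun y : G => y ≠ 1 ∧ y ≠ x ∧ y ∈ Subgroup.zpowers x] :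
    #(univ.filter fun y : G => y ≠ 1 ∧ y ≠ x ∧ y ∈ Subgroup.zpowers x)
      = orderOf x - 2 := by
  classical
  have hC : #(univ.filter fun y : G => y ∈ Subgroup.zpowers x) = orderOf x := by
    rw [← Fintype.card_subtype, ← Nat.card_eq_fintype_card, Nat.card_zpowers]
  have hset : (univ.filter fun y : G => y ≠ 1 ∧ y ≠ x ∧ y ∈ Subgroup.zpowers x)
      = ((univ.filter fun y : G => y ∈ Subgroup.zpowers x).erase 1).erase x := by
    ext y
    simp only [mem_filter, mem_univ, true_and, mem_erase]
    tauto
  rw [hset, card_erase_of_mem, card_erase_of_mem, hC]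
  · omega
  · simp [Subgroup.one_mem]
  · simp [hx, Subgroup.mem_zpowers]

end Aux

theorem powerGraphStar_edge_count (G : Type*) [Group G] [Fintype G] [DecidableEq G] :
    2 * ((powerGraphStar G).edgeSet.ncard) =
      ∑ g ∈ Finset.univ.erase (1 : G), (2 * orderOf g - Nat.totient (orderOf g) - 3) := by
  classical
  -- step 1 : handshake, to ordered pairs over the subtype
  have h1 : 2 * ((powerGraphStar G).edgeSet.ncard)
      = #(univ.filter fun p : {g : G // g ≠ 1} × {g : G // g ≠ 1} =>
          (powerGraphStar G).Adj p.1 p.2) := by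
    rw [Set.ncard_eq_toFinset_card' ((powerGraphStar G).edgeSet)]
    rw [show ((powerGraphStar G).edgeSet).toFinset = (powerGraphStar G).edgeFinset from rfl]
    rw [SimpleGraph.two_mul_card_edgeFinset]
  -- step 2 : move to ordered pairs in G × G
  set D : Finset (G × G) := univ.filter fun p : G × G =>
      p.1 ≠ 1 ∧ p.2 ≠ 1 ∧ (powerGraph G).Adj p.1 p.2 with hD
  have h2 : #(univ.filter fun p : {g : G // g ≠ 1} × {g : G // g ≠ 1} =>
      (powerGraphStar G).Adj p.1 p.2) = #D := by
    apply Finset.card_bij (fun p _ => ((p.1 : G), (p.2 : G)))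
    · rintro ⟨a, b⟩ hp
      have := (mem_filter.mp hp).2
      simp only [hD, mem_filter, mem_univ, true_and]
      exact ⟨a.2, b.2, this⟩
    · rintro ⟨a, b⟩ _ ⟨c, d⟩ _ h
      simp only [Prod.mk.injEq] at h
      ext
      · exact congrArg Subtype.val (Subtype.ext h.1) ▸ h.1
      · exact h.2
    · rintro ⟨a, b⟩ hp
      obtain ⟨ha, hb, hadj⟩ := (mem_filter.mp hp).2
      exact ⟨(⟨a, ha⟩, ⟨b, hb⟩), by simpa [powerGraphStar] using hadj, rfl⟩
  -- step 3 : split into two halves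
  set P : Finset (G × G) := univ.filter fun p : G × G =>
      p.1 ≠ 1 ∧ p.2 ≠ 1 ∧ p.1 ≠ p.2 ∧ p.2 ∈ Subgroup.zpowers p.1 with hP
  set Q : Finset (G × G) := univ.filter fun p : G × G =>
      p.1 ≠ 1 ∧ p.2 ≠ 1 ∧ p.1 ≠ p.2 ∧ p.1 ∈ Subgroup.zpowers p.2 with hQ
  set R : Finset (G × G) := univ.filter fun p : G × G =>
      p.1 ≠ 1 ∧ p.2 ≠ 1 ∧ p.1 ≠ p.2 ∧ Subgroup.zpowers p.2 = Subgroup.zpowers p.1 with hR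
  have hDPQ : D = P ∪ Q := by
    ext ⟨a, b⟩
    simp only [hD, hP, hQ, mem_union, mem_filter, mem_univ, true_and, powerGraph_adj]
    tauto
  have hRPQ : R = P ∩ Q := by
    ext ⟨a, b⟩
    simp only [hR, hP, hQ, mem_inter, mem_filter, mem_univ, true_and]
    constructor
    · rintro ⟨h1, h2, h3, h4⟩
      exact ⟨⟨h1, h2, h3, h4 ▸ Subgroup.mem_zpowers b⟩,
        ⟨h1, h2, h3, h4.symm ▸ Subgroup.mem_zpowers a⟩⟩
    · rintro ⟨⟨h1, h2, h3, h4⟩, ⟨-, -, -, h5⟩⟩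
      exact ⟨h1, h2, h3, le_antisymm (Subgroup.zpowers_le.mpr h4) (Subgroup.zpowers_le.mpr h5)⟩
  have hQP : #Q = #P := by
    apply Finset.card_bij (fun p _ => p.swap)
    · rintro ⟨a, b⟩ hp
      obtain ⟨h1, h2, h3, h4⟩ := (mem_filter.mp hp).2
      simp only [hP, mem_filter, mem_univ, true_and, Prod.swap]
      exact ⟨h2, h1, h3.symm, h4⟩
    · rintro ⟨a, b⟩ _ ⟨c, d⟩ _ h
      simpa [Prod.ext_iff, and_comm] using h
    · rintro ⟨a, b⟩ hp
      obtain ⟨h1, h2, h3, h4⟩ := (mem_filter.mp hp).2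
      refine ⟨(b, a), ?_, rfl⟩
      simp only [hQ, mem_filter, mem_univ, true_and]
      exact ⟨h2, h1, h3.symm, h4⟩
  have hunion : #D + #R = #P + #Q := by
    rw [hDPQ, hRPQ]
    exact Finset.card_union_add_card_inter P Q
  -- step 4 : fiberwise counts
  have hPcount : #P = ∑ g ∈ univ.erase (1 : G), (orderOf g - 2) := by
    rw [Finset.card_eq_sum_card_fiberwise (f := Prod.fst) (t := univ.erase (1 : G))
      (fun p hp => by simp [mem_erase, (mem_filter.mp hp).2.1])]
    refine Finset.sum_congr rfl fun x hx => ?_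
    have hx1 : x ≠ 1 := (mem_erase.mp hx).1
    rw [← card_A x hx1]
    apply Finset.card_bij (fun p _ => p.2)
    · rintro ⟨a, b⟩ hp
      simp only [mem_filter] at hp ⊢
      obtain ⟨hab, hfst⟩ := hp
      obtain ⟨h1, h2, h3, h4⟩ := (mem_filter.mp hab).2
      subst hfst
      exact ⟨mem_univ _, h2, fun h => h3 h.symm, h4⟩
    · rintro ⟨a, b⟩ ha ⟨c, d⟩ hc h
      have ha' := (mem_filter.mp ha).2
      have hc' := (mem_filter.mp hc).2
      simp only at ha' hc' h
      simp [Prod.ext_iff, ha', hc', h]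
    · intro b hb
      obtain ⟨-, h1, h2, h3⟩ := mem_filter.mp hb
      refine ⟨(x, b), mem_filter.mpr ⟨?_, rfl⟩, rfl⟩
      simp only [hP, mem_filter, mem_univ, true_and]
      exact ⟨hx1, h1, fun h => h2 h.symm, h3⟩
  have hRcount : #R = ∑ g ∈ univ.erase (1 : G), (Nat.totient (orderOf g) - 1) := by
    rw [Finset.card_eq_sum_card_fiberwise (f := Prod.fst) (t := univ.erase (1 : G))
      (fun p hp => by simp [mem_erase, (mem_filter.mp hp).2.1])]
    refine Finset.sum_congr rfl fun x hx => ?_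
    have hx1 : x ≠ 1 := (mem_erase.mp hx).1
    have hfib : #(R.filter fun p => p.1 = x)
        = #(univ.filter fun y : G => y ≠ x ∧ Subgroup.zpowers y = Subgroup.zpowers x) := by
      apply Finset.card_bij (fun p _ => p.2)
      · rintro ⟨a, b⟩ hp
        simp only [mem_filter] at hp ⊢
        obtain ⟨hab, hfst⟩ := hp
        obtain ⟨h1, h2, h3, h4⟩ := (mem_filter.mp hab).2
        subst hfst
        exact ⟨mem_univ _, fun h => h3 h.symm, h4⟩
      · rintro ⟨a, b⟩ ha ⟨c, d⟩ hc h
        have ha' := (mem_filter.mp ha).2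
        have hc' := (mem_filter.mp hc).2
        simp only at ha' hc' h
        simp [Prod.ext_iff, ha', hc', h]
      · intro b hb
        obtain ⟨-, h2, h3⟩ := mem_filter.mp hb
        have hb1 : b ≠ 1 := by
          intro h; subst h
          rw [Subgroup.zpowers_one_eq_bot] at h3
          exact hx1 (Subgroup.zpowers_eq_bot.mp h3.symm)
        refine ⟨(x, b), mem_filter.mpr ⟨?_, rfl⟩, rfl⟩
        simp only [hR, mem_filter, mem_univ, true_and]
        exact ⟨hx1, hb1, fun h => h2 h.symm, h3⟩
    have herase : (univ.filter fun y : G => y ≠ x ∧ Subgroup.zpowers y = Subgroup.zpowers x)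
        = (univ.filter fun y : G => Subgroup.zpowers y = Subgroup.zpowers x).erase x := by
      ext y
      simp only [mem_filter, mem_univ, true_and, mem_erase]
    rw [hfib, herase, card_erase_of_mem (by simp), card_filter_zpowers_eq x]
  -- step 5 : arithmetic
  have hbound : ∀ g ∈ univ.erase (1 : G),
      2 ≤ orderOf g ∧ 1 ≤ Nat.totient (orderOf g) ∧ Nat.totient (orderOf g) ≤ orderOf g - 1 := by
    intro g hg
    have hg1 : g ≠ 1 := (mem_erase.mp hg).1
    have h2 : 2 ≤ orderOf g := by
      have hpos := orderOf_pos g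
      have hne : orderOf g ≠ 1 := fun h => hg1 (orderOf_eq_one_iff.mp h)
      omega
    refine ⟨h2, Nat.totient_pos.mpr (by omega), ?_⟩
    have := Nat.totient_lt (orderOf g) (by omega)
    omega
  have hsum : (∑ g ∈ univ.erase (1 : G), (2 * orderOf g - Nat.totient (orderOf g) - 3))
      + (∑ g ∈ univ.erase (1 : G), (Nat.totient (orderOf g) - 1))
      = 2 * ∑ g ∈ univ.erase (1 : G), (orderOf g - 2) := by
    rw [← Finset.sum_add_distrib, Finset.mul_sum]
    refine Finset.sum_congr rfl fun g hg => ?_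
    obtain ⟨a1, a2, a3⟩ := hbound g hg
    omega
  have key : 2 * ((powerGraphStar G).edgeSet.ncard) + #R = 2 * ∑ g ∈ univ.erase (1 : G), (orderOf g - 2) := by
    rw [h1, h2, hunion, hQP, hPcount]
    ring
  rw [hRcount] at key
  omega
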